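/- arXiv:2207.04485 — 2 statements merged into one kernel-verified Lean document; each statement's English description precedes it below -/
import Mathlib

section
/- Let α ∈ ℝ and let u : ℝ → 𝒮(ℝ;ℂ) be a continuously differentiable curve in the Schwartz space, written u(t,x), which solves the nonlocal NLS: for all (t,x), i∂ₜu(t,x) + ∂ₓ²u(t,x) + α u(t,x)² conj(u(t,−x)) = 0. Then the energy E(t) := ∫_ℝ [ ∂ₓu(t,x) · conj(∂ₓu(t,−x)) + (α/2) u(t,x)² · conj(u(t,−x))² ] dx is constant in t: E(t) = E(0) for all t. -/
open MeasureTheory Filter Metric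

open scoped Topology

namespace NNLSAux

noncomputable section

/-- Spatial derivative as a Schwartz map. -/
def D (φ : SchwartzMap ℝ ℂ) : SchwartzMap ℝ ℂ := SchwartzMap.derivCLM ℝ ℂ φ

lemma D_apply (φ : SchwartzMap ℝ ℂ) (x : ℝ) : D φ x = deriv φ x :=
  SchwartzMap.derivCLM_apply ℝ φ x

lemma deriv_eq_D (φ : SchwartzMap ℝ ℂ) : deriv ⇑φ = ⇑(D φ) :=
  funext fun x => (D_apply φ x).symm

lemma D_continuous : Continuous fun φ : SchwartzMap ℝ ℂ => D φ := by
  unfold D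
  exact (SchwartzMap.derivCLM ℝ ℂ).continuous

lemma eval_continuous (x : ℝ) : Continuous fun φ : SchwartzMap ℝ ℂ => φ x := by
  have : (fun φ : SchwartzMap ℝ ℂ => φ x) = fun φ => TemperedDistribution.delta x φ := by
    funext φ; rw [TemperedDistribution.delta_apply]
  rw [this]
  exact (TemperedDistribution.delta x).continuous

lemma hasDerivAt_D (φ : SchwartzMap ℝ ℂ) (x : ℝ) : HasDerivAt φ (D φ x) x := by
  rw [D_apply]
  exact φ.differentiableAt.hasDerivAt

/-- Decay control. -/
def m (φ : SchwartzMap ℝ ℂ) : ℝ :=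
  SchwartzMap.seminorm ℝ 0 0 φ + SchwartzMap.seminorm ℝ 2 0 φ

lemma m_nonneg (φ : SchwartzMap ℝ ℂ) : 0 ≤ m φ :=
  add_nonneg (apply_nonneg _ _) (apply_nonneg _ _)

lemma m_continuous : Continuous m := by
  have h1 := (schwartz_withSeminorms ℝ ℝ ℂ).continuous_seminorm (0, 0)
  have h2 := (schwartz_withSeminorms ℝ ℝ ℂ).continuous_seminorm (2, 0)
  exact h1.add h2

lemma norm_le_m (φ : SchwartzMap ℝ ℂ) (x : ℝ) : ‖φ x‖ ≤ m φ :=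
  (φ.norm_le_seminorm ℝ x).trans (le_add_of_nonneg_right (apply_nonneg _ _))

lemma norm_le_m_decay (φ : SchwartzMap ℝ ℂ) (x : ℝ) :
    ‖φ x‖ ≤ m φ * (1 + x ^ 2)⁻¹ := by
  have hpos : (0:ℝ) < 1 + x ^ 2 := by positivity
  rw [le_mul_inv_iff₀ hpos]
  have h0 := φ.norm_le_seminorm ℝ x
  have h2 := SchwartzMap.norm_pow_mul_le_seminorm ℝ φ 2 x
  have hx : ‖x‖ ^ 2 = x ^ 2 := by
    rw [Real.norm_eq_abs, sq_abs]
  rw [hx] at h2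
  unfold m
  nlinarith [norm_nonneg (φ x)]

lemma norm_le_m_decay_neg (φ : SchwartzMap ℝ ℂ) (x : ℝ) :
    ‖φ (-x)‖ ≤ m φ * (1 + x ^ 2)⁻¹ := by
  simpa [neg_sq] using norm_le_m_decay φ (-x)

lemma norm_le_m_neg (φ : SchwartzMap ℝ ℂ) (x : ℝ) : ‖φ (-x)‖ ≤ m φ :=
  norm_le_m φ (-x)

lemma mul_bound {z w : ℂ} {a b : ℝ} (hz : ‖z‖ ≤ a) (hw : ‖w‖ ≤ b) :
    ‖z * w‖ ≤ a * b := by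
  rw [norm_mul]
  exact mul_le_mul hz hw (norm_nonneg _) ((norm_nonneg z).trans hz)

lemma sq_bound {z : ℂ} {a : ℝ} (h : ‖z‖ ≤ a) : ‖z ^ 2‖ ≤ a ^ 2 := by
  rw [norm_pow]
  exact pow_le_pow_left₀ (norm_nonneg _) h 2

lemma conj_norm (z : ℂ) : ‖(starRingEnd ℂ) z‖ = ‖z‖ := RCLike.norm_conj z

lemma integrable_decay {f : ℝ → ℂ} (c : ℝ) (hf : Continuous f)
    (h : ∀ x, ‖f x‖ ≤ c * (1 + x ^ 2)⁻¹) : Integrable f := by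
  refine (integrable_inv_one_add_sq.const_mul c).mono' hf.aestronglyMeasurable ?_
  exact ae_of_all _ h

lemma hasDerivAt_conj_neg (φ : SchwartzMap ℝ ℂ) (x : ℝ) :
    HasDerivAt (fun y => (starRingEnd ℂ) (φ (-y))) (-((starRingEnd ℂ) (D φ (-x)))) x := by
  have h1 := HasDerivAt.scomp (𝕜 := ℝ) x (hasDerivAt_D φ (-x)) (hasDerivAt_neg x)
  have h2 := h1.star
  simp only [starRingEnd_apply]
  simpa [Function.comp_def, neg_smul, one_smul] using h2

/-- Key interchange: the time derivative of the spatial derivative. -/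
lemma timeDerivD (u ut : ℝ → SchwartzMap ℝ ℂ) (hut : Continuous ut)
    (hderiv : ∀ t x : ℝ, HasDerivAt (fun τ => u τ x) (ut t x) t) (t x : ℝ) :
    HasDerivAt (fun τ => D (u τ) x) (D (ut t) x) t := by
  have heval : ∀ y : ℝ, Continuous fun s => ut s y := fun y => (eval_continuous y).comp hut
  have hgcont : ∀ y : ℝ, Continuous fun s => D (ut s) y := fun y =>
    (eval_continuous y).comp (D_continuous.comp hut)
  have key : ∀ τ : ℝ, D (u τ) x = D (u 0) x + ∫ s in (0:ℝ)..τ, D (ut s) x := by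
    intro τ
    have hfun : ⇑(u τ) = fun y => u 0 y + ∫ s in (0:ℝ)..τ, ut s y := by
      funext y
      have hFTC := intervalIntegral.integral_eq_sub_of_hasDerivAt
        (f := fun s => u s y) (f' := fun s => ut s y)
        (fun s _ => hderiv s y) ((heval y).intervalIntegrable 0 τ)
      linear_combination -hFTC
    have hint : HasDerivAt (fun y => ∫ s in (0:ℝ)..τ, ut s y)
        (∫ s in (0:ℝ)..τ, D (ut s) x) x := by
      have := intervalIntegral.hasDerivAt_integral_of_dominated_loc_of_deriv_le
        (F := fun y s => ut s y) (F' := fun y s => D (ut s) y) (x₀ := x)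
        (a := (0:ℝ)) (b := τ) (bound := fun s => m (D (ut s))) (μ := volume)
        (s := ball x 1) (ball_mem_nhds x one_pos)
        (Eventually.of_forall fun y => ((heval y).aestronglyMeasurable).restrict)
        ((heval x).intervalIntegrable 0 τ)
        ((hgcont x).aestronglyMeasurable.restrict)
        (ae_of_all _ fun s _ y _ => norm_le_m (D (ut s)) y)
        ((m_continuous.comp (D_continuous.comp hut)).intervalIntegrable 0 τ)
        (ae_of_all _ fun s _ y _ => hasDerivAt_D (ut s) y)
      exact this.2
    have h1 : HasDerivAt ⇑(u τ) (D (u 0) x + ∫ s in (0:ℝ)..τ, D (ut s) x) x := by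
      rw [hfun]
      exact (hasDerivAt_D (u 0) x).add hint
    exact (hasDerivAt_D (u τ) x).unique h1
  have hfun2 : (fun τ => D (u τ) x) =
      fun τ => D (u 0) x + ∫ s in (0:ℝ)..τ, D (ut s) x := funext key
  rw [hfun2]
  have hFTC1 : HasDerivAt (fun τ => ∫ s in (0:ℝ)..τ, D (ut s) x) (D (ut t) x) t :=
    intervalIntegral.integral_hasDerivAt_right ((hgcont x).intervalIntegrable 0 t)
      ((hgcont x).stronglyMeasurableAtFilter volume (𝓝 t)) (hgcont x).continuousAt
  exact hFTC1.const_add _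


lemma conj_neg_continuous (χ : SchwartzMap ℝ ℂ) :
    Continuous fun x : ℝ => (starRingEnd ℂ) (χ (-x)) := by
  simp only [starRingEnd_apply]
  exact (χ.continuous.comp continuous_neg).star

lemma conj_neg_norm_decay (χ : SchwartzMap ℝ ℂ) (x : ℝ) :
    ‖(starRingEnd ℂ) (χ (-x))‖ ≤ m χ * (1 + x ^ 2)⁻¹ := by
  rw [conj_norm]; exact norm_le_m_decay_neg χ x

lemma conj_neg_norm_le (χ : SchwartzMap ℝ ℂ) (x : ℝ) :
    ‖(starRingEnd ℂ) (χ (-x))‖ ≤ m χ := by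
  rw [conj_norm]; exact norm_le_m χ (-x)

lemma sq_conj_decay (χ : SchwartzMap ℝ ℂ) (x : ℝ) :
    ‖((starRingEnd ℂ) (χ (-x))) ^ 2‖ ≤ m χ * m χ * (1 + x ^ 2)⁻¹ := by
  rw [norm_pow, conj_norm, sq]
  calc ‖χ (-x)‖ * ‖χ (-x)‖ ≤ m χ * (m χ * (1 + x ^ 2)⁻¹) :=
        mul_le_mul (norm_le_m _ _) (norm_le_m_decay_neg _ _) (norm_nonneg _) (m_nonneg _)
    _ = m χ * m χ * (1 + x ^ 2)⁻¹ := by ring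

lemma integrable_of_bounds {f g : ℝ → ℂ} {a b : ℝ} (hf : Continuous f) (hg : Continuous g)
    (ha : ∀ x, ‖f x‖ ≤ a) (hb : ∀ x, ‖g x‖ ≤ b * (1 + x ^ 2)⁻¹) :
    Integrable (fun x => f x * g x) :=
  integrable_decay (a * b) (hf.mul hg)
    (fun x => (mul_bound (ha x) (hb x)).trans_eq (mul_assoc a b _).symm)

/-- Integration by parts, form 1. -/
lemma ibp1 (φ ψ : SchwartzMap ℝ ℂ) :
    (∫ x : ℝ, D ψ x * (starRingEnd ℂ) (D φ (-x)))
      = ∫ x : ℝ, ψ x * (starRingEnd ℂ) (D (D φ) (-x)) := by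
  have huv' : Integrable (fun x : ℝ => ψ x * -((starRingEnd ℂ) (D (D φ) (-x)))) := by
    refine integrable_of_bounds (b := m (D (D φ))) ψ.continuous
      (conj_neg_continuous (D (D φ))).neg (norm_le_m ψ) ?_
    intro x; rw [norm_neg]; exact conj_neg_norm_decay _ x
  have hu'v : Integrable (fun x : ℝ => D ψ x * (starRingEnd ℂ) (D φ (-x))) :=
    integrable_of_bounds (D ψ).continuous (conj_neg_continuous (D φ))
      (norm_le_m (D ψ)) (conj_neg_norm_decay (D φ))
  have huv : Integrable (fun x : ℝ => ψ x * (starRingEnd ℂ) (D φ (-x))) :=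
    integrable_of_bounds ψ.continuous (conj_neg_continuous (D φ))
      (norm_le_m ψ) (conj_neg_norm_decay (D φ))
  have h := MeasureTheory.integral_mul_deriv_eq_deriv_mul_of_integrable
    (u := ⇑ψ) (v := fun x => (starRingEnd ℂ) (D φ (-x)))
    (u' := ⇑(D ψ)) (v' := fun x => -((starRingEnd ℂ) (D (D φ) (-x))))
    (fun x _ => hasDerivAt_D ψ x) (fun x _ => hasDerivAt_conj_neg (D φ) x) huv' hu'v huv
  simp only [Pi.mul_apply, mul_neg] at h
  rw [integral_neg] at h
  exact (neg_inj.mp h).symm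

/-- Integration by parts, form 2. -/
lemma ibp2 (φ ψ : SchwartzMap ℝ ℂ) :
    (∫ x : ℝ, D φ x * (starRingEnd ℂ) (D ψ (-x)))
      = ∫ x : ℝ, D (D φ) x * (starRingEnd ℂ) (ψ (-x)) := by
  have huv' : Integrable (fun x : ℝ => (starRingEnd ℂ) (ψ (-x)) * D (D φ) x) :=
    integrable_of_bounds (conj_neg_continuous ψ) (D (D φ)).continuous
      (conj_neg_norm_le ψ) (norm_le_m_decay (D (D φ)))
  have hu'v : Integrable (fun x : ℝ => -((starRingEnd ℂ) (D ψ (-x))) * D φ x) := by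
    refine integrable_of_bounds (a := m (D ψ)) (conj_neg_continuous (D ψ)).neg
      (D φ).continuous ?_ (norm_le_m_decay (D φ))
    intro x; rw [norm_neg]; exact conj_neg_norm_le _ x
  have huv : Integrable (fun x : ℝ => (starRingEnd ℂ) (ψ (-x)) * D φ x) :=
    integrable_of_bounds (conj_neg_continuous ψ) (D φ).continuous
      (conj_neg_norm_le ψ) (norm_le_m_decay (D φ))
  have h := MeasureTheory.integral_mul_deriv_eq_deriv_mul_of_integrable
    (u := fun x => (starRingEnd ℂ) (ψ (-x))) (v := ⇑(D φ))
    (u' := fun x => -((starRingEnd ℂ) (D ψ (-x)))) (v' := ⇑(D (D φ)))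
    (fun x _ => hasDerivAt_conj_neg ψ x) (fun x _ => hasDerivAt_D (D φ) x) huv' hu'v huv
  simp only [Pi.mul_apply, neg_mul] at h
  rw [integral_neg, neg_neg] at h
  have e1 : (fun x : ℝ => D φ x * (starRingEnd ℂ) (D ψ (-x)))
      = fun x : ℝ => (starRingEnd ℂ) (D ψ (-x)) * D φ x := by funext x; ring
  have e2 : (fun x : ℝ => D (D φ) x * (starRingEnd ℂ) (ψ (-x)))
      = fun x : ℝ => (starRingEnd ℂ) (ψ (-x)) * D (D φ) x := by funext x; ring
  rw [e1, e2, ← h]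

/-- The energy density. -/
def EI (α : ℝ) (φ : SchwartzMap ℝ ℂ) (x : ℝ) : ℂ :=
  D φ x * (starRingEnd ℂ) (D φ (-x))
    + (α / 2 : ℂ) * φ x ^ 2 * ((starRingEnd ℂ) (φ (-x))) ^ 2

/-- The (formal) time derivative of the energy density. -/
def ED (α : ℝ) (φ ψ : SchwartzMap ℝ ℂ) (x : ℝ) : ℂ :=
  D ψ x * (starRingEnd ℂ) (D φ (-x)) + D φ x * (starRingEnd ℂ) (D ψ (-x))
    + (α : ℂ) * (φ x * ψ x) * ((starRingEnd ℂ) (φ (-x))) ^ 2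
    + (α : ℂ) * φ x ^ 2 * ((starRingEnd ℂ) (φ (-x)) * (starRingEnd ℂ) (ψ (-x)))

lemma EI_cont (α : ℝ) (φ : SchwartzMap ℝ ℂ) : Continuous fun x => EI α φ x := by
  unfold EI
  exact ((D φ).continuous.mul (conj_neg_continuous (D φ))).add
    ((continuous_const.mul (φ.continuous.pow 2)).mul ((conj_neg_continuous φ).pow 2))

lemma ED_cont (α : ℝ) (φ ψ : SchwartzMap ℝ ℂ) : Continuous fun x => ED α φ ψ x := by
  unfold ED
  exact ((((D ψ).continuous.mul (conj_neg_continuous (D φ))).add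
    ((D φ).continuous.mul (conj_neg_continuous (D ψ)))).add
    ((continuous_const.mul (φ.continuous.mul ψ.continuous)).mul
      ((conj_neg_continuous φ).pow 2))).add
    ((continuous_const.mul (φ.continuous.pow 2)).mul
      ((conj_neg_continuous φ).mul (conj_neg_continuous ψ)))

lemma norm_coe_le (α : ℝ) : ‖(α : ℂ)‖ ≤ |α| := by
  rw [Complex.norm_real, Real.norm_eq_abs]

lemma norm_half_le (α : ℝ) : ‖(α / 2 : ℂ)‖ ≤ |α| := by
  have h2 : ‖(2 : ℂ)‖ = 2 := by norm_num
  rw [show ((α : ℝ) / 2 : ℂ) = (α : ℂ) / 2 by push_cast; ring, norm_div, h2,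
    Complex.norm_real, Real.norm_eq_abs]
  linarith [abs_nonneg α]

/-- Decay coefficient for `EI`. -/
def cI (α : ℝ) (φ : SchwartzMap ℝ ℂ) : ℝ :=
  m (D φ) * m (D φ) + |α| * m φ ^ 2 * (m φ * m φ)

/-- Decay coefficient for `ED`. -/
def cE (α : ℝ) (φ ψ : SchwartzMap ℝ ℂ) : ℝ :=
  m (D ψ) * m (D φ) + m (D φ) * m (D ψ)
    + |α| * (m φ * m ψ) * (m φ * m φ) + |α| * m φ ^ 2 * (m φ * m ψ)

lemma norm_EI_le (α : ℝ) (φ : SchwartzMap ℝ ℂ) (x : ℝ) :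
    ‖EI α φ x‖ ≤ cI α φ * (1 + x ^ 2)⁻¹ := by
  unfold EI
  calc ‖D φ x * (starRingEnd ℂ) (D φ (-x))
        + (α / 2 : ℂ) * φ x ^ 2 * ((starRingEnd ℂ) (φ (-x))) ^ 2‖
      ≤ ‖D φ x * (starRingEnd ℂ) (D φ (-x))‖
        + ‖(α / 2 : ℂ) * φ x ^ 2 * ((starRingEnd ℂ) (φ (-x))) ^ 2‖ := norm_add_le _ _
    _ ≤ m (D φ) * (m (D φ) * (1 + x ^ 2)⁻¹)
        + (|α| * m φ ^ 2) * (m φ * m φ * (1 + x ^ 2)⁻¹) := by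
        refine add_le_add (mul_bound (norm_le_m _ _) (conj_neg_norm_decay _ _)) ?_
        exact mul_bound (mul_bound (norm_half_le α) (sq_bound (norm_le_m φ x)))
          (sq_conj_decay φ x)
    _ = cI α φ * (1 + x ^ 2)⁻¹ := by unfold cI; ring

lemma norm_ED_le (α : ℝ) (φ ψ : SchwartzMap ℝ ℂ) (x : ℝ) :
    ‖ED α φ ψ x‖ ≤ cE α φ ψ * (1 + x ^ 2)⁻¹ := by
  unfold ED
  have h1 : ‖D ψ x * (starRingEnd ℂ) (D φ (-x))‖ ≤ m (D ψ) * (m (D φ) * (1 + x ^ 2)⁻¹) :=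
    mul_bound (norm_le_m _ _) (conj_neg_norm_decay _ _)
  have h2 : ‖D φ x * (starRingEnd ℂ) (D ψ (-x))‖ ≤ m (D φ) * (m (D ψ) * (1 + x ^ 2)⁻¹) :=
    mul_bound (norm_le_m _ _) (conj_neg_norm_decay _ _)
  have h3 : ‖(α : ℂ) * (φ x * ψ x) * ((starRingEnd ℂ) (φ (-x))) ^ 2‖
      ≤ (|α| * (m φ * m ψ)) * (m φ * m φ * (1 + x ^ 2)⁻¹) :=
    mul_bound (mul_bound (norm_coe_le α) (mul_bound (norm_le_m φ x) (norm_le_m ψ x)))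
      (sq_conj_decay φ x)
  have h4 : ‖(α : ℂ) * φ x ^ 2 * ((starRingEnd ℂ) (φ (-x)) * (starRingEnd ℂ) (ψ (-x)))‖
      ≤ (|α| * m φ ^ 2) * ((m φ * (1 + x ^ 2)⁻¹) * m ψ) :=
    mul_bound (mul_bound (norm_coe_le α) (sq_bound (norm_le_m φ x)))
      (mul_bound (conj_neg_norm_decay φ x) (conj_neg_norm_le ψ x))
  calc ‖D ψ x * (starRingEnd ℂ) (D φ (-x)) + D φ x * (starRingEnd ℂ) (D ψ (-x))
        + (α : ℂ) * (φ x * ψ x) * ((starRingEnd ℂ) (φ (-x))) ^ 2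
        + (α : ℂ) * φ x ^ 2 * ((starRingEnd ℂ) (φ (-x)) * (starRingEnd ℂ) (ψ (-x)))‖
      ≤ ‖D ψ x * (starRingEnd ℂ) (D φ (-x)) + D φ x * (starRingEnd ℂ) (D ψ (-x))
          + (α : ℂ) * (φ x * ψ x) * ((starRingEnd ℂ) (φ (-x))) ^ 2‖
        + ‖(α : ℂ) * φ x ^ 2 * ((starRingEnd ℂ) (φ (-x)) * (starRingEnd ℂ) (ψ (-x)))‖ :=
        norm_add_le _ _
    _ ≤ (‖D ψ x * (starRingEnd ℂ) (D φ (-x)) + D φ x * (starRingEnd ℂ) (D ψ (-x))‖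
          + ‖(α : ℂ) * (φ x * ψ x) * ((starRingEnd ℂ) (φ (-x))) ^ 2‖)
        + ‖(α : ℂ) * φ x ^ 2 * ((starRingEnd ℂ) (φ (-x)) * (starRingEnd ℂ) (ψ (-x)))‖ := by
        exact add_le_add (norm_add_le _ _) le_rfl
    _ ≤ ((‖D ψ x * (starRingEnd ℂ) (D φ (-x))‖ + ‖D φ x * (starRingEnd ℂ) (D ψ (-x))‖)
          + ‖(α : ℂ) * (φ x * ψ x) * ((starRingEnd ℂ) (φ (-x))) ^ 2‖)
        + ‖(α : ℂ) * φ x ^ 2 * ((starRingEnd ℂ) (φ (-x)) * (starRingEnd ℂ) (ψ (-x)))‖ := by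
        exact add_le_add (add_le_add (norm_add_le _ _) le_rfl) le_rfl
    _ ≤ ((m (D ψ) * (m (D φ) * (1 + x ^ 2)⁻¹) + m (D φ) * (m (D ψ) * (1 + x ^ 2)⁻¹))
          + (|α| * (m φ * m ψ)) * (m φ * m φ * (1 + x ^ 2)⁻¹))
        + (|α| * m φ ^ 2) * ((m φ * (1 + x ^ 2)⁻¹) * m ψ) :=
        add_le_add (add_le_add (add_le_add h1 h2) h3) h4
    _ = cE α φ ψ * (1 + x ^ 2)⁻¹ := by unfold cE; ring

lemma integrable_ED_pieces (α : ℝ) (φ ψ : SchwartzMap ℝ ℂ) :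
    Integrable (fun x : ℝ => D ψ x * (starRingEnd ℂ) (D φ (-x)))
    ∧ Integrable (fun x : ℝ => D φ x * (starRingEnd ℂ) (D ψ (-x)))
    ∧ Integrable (fun x : ℝ => (α : ℂ) * (φ x * ψ x) * ((starRingEnd ℂ) (φ (-x))) ^ 2)
    ∧ Integrable (fun x : ℝ =>
        (α : ℂ) * φ x ^ 2 * ((starRingEnd ℂ) (φ (-x)) * (starRingEnd ℂ) (ψ (-x)))) := by
  refine ⟨?_, ?_, ?_, ?_⟩
  · exact integrable_of_bounds (D ψ).continuous (conj_neg_continuous (D φ))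
      (norm_le_m (D ψ)) (conj_neg_norm_decay (D φ))
  · exact integrable_of_bounds (D φ).continuous (conj_neg_continuous (D ψ))
      (norm_le_m (D φ)) (conj_neg_norm_decay (D ψ))
  · refine integrable_of_bounds (a := |α| * (m φ * m ψ)) (b := m φ * m φ)
      (continuous_const.mul (φ.continuous.mul ψ.continuous))
      ((conj_neg_continuous φ).pow 2) ?_ (sq_conj_decay φ)
    intro x
    exact mul_bound (norm_coe_le α) (mul_bound (norm_le_m φ x) (norm_le_m ψ x))
  · refine integrable_of_bounds (a := |α| * m φ ^ 2) (b := m φ * m ψ)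
      (continuous_const.mul (φ.continuous.pow 2))
      ((conj_neg_continuous φ).mul (conj_neg_continuous ψ)) ?_ ?_
    · intro x
      exact mul_bound (norm_coe_le α) (sq_bound (norm_le_m φ x))
    · intro x
      exact (mul_bound (conj_neg_norm_decay φ x) (conj_neg_norm_le ψ x)).trans_eq (by ring)

/-- The formal time derivative of the energy integrates to zero, given the equation. -/
lemma integral_ED_zero (α : ℝ) (φ ψ : SchwartzMap ℝ ℂ)
    (hps : ∀ x : ℝ, Complex.I * ψ x + D (D φ) x
      + (α : ℂ) * φ x ^ 2 * (starRingEnd ℂ) (φ (-x)) = 0) :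
    (∫ x : ℝ, ED α φ ψ x) = 0 := by
  obtain ⟨i1, i2, i3, i4⟩ := integrable_ED_pieces α φ ψ
  have i1' : Integrable (fun x : ℝ => ψ x * (starRingEnd ℂ) (D (D φ) (-x))) :=
    integrable_of_bounds ψ.continuous (conj_neg_continuous (D (D φ)))
      (norm_le_m ψ) (conj_neg_norm_decay (D (D φ)))
  have i2' : Integrable (fun x : ℝ => D (D φ) x * (starRingEnd ℂ) (ψ (-x))) :=
    integrable_of_bounds (D (D φ)).continuous (conj_neg_continuous ψ)
      (norm_le_m (D (D φ))) (conj_neg_norm_decay ψ)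
  have i12 : Integrable (fun x : ℝ => D ψ x * (starRingEnd ℂ) (D φ (-x))
      + D φ x * (starRingEnd ℂ) (D ψ (-x))) := i1.add i2
  have i123 : Integrable (fun x : ℝ => D ψ x * (starRingEnd ℂ) (D φ (-x))
      + D φ x * (starRingEnd ℂ) (D ψ (-x))
      + (α : ℂ) * (φ x * ψ x) * ((starRingEnd ℂ) (φ (-x))) ^ 2) := i12.add i3
  have i12' : Integrable (fun x : ℝ => ψ x * (starRingEnd ℂ) (D (D φ) (-x))
      + D (D φ) x * (starRingEnd ℂ) (ψ (-x))) := i1'.add i2'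
  have i123' : Integrable (fun x : ℝ => ψ x * (starRingEnd ℂ) (D (D φ) (-x))
      + D (D φ) x * (starRingEnd ℂ) (ψ (-x))
      + (α : ℂ) * (φ x * ψ x) * ((starRingEnd ℂ) (φ (-x))) ^ 2) := i12'.add i3
  have eA : (∫ x : ℝ, ED α φ ψ x)
      = (∫ x : ℝ, D ψ x * (starRingEnd ℂ) (D φ (-x)) + D φ x * (starRingEnd ℂ) (D ψ (-x))
          + (α : ℂ) * (φ x * ψ x) * ((starRingEnd ℂ) (φ (-x))) ^ 2)
        + ∫ x : ℝ, (α : ℂ) * φ x ^ 2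
            * ((starRingEnd ℂ) (φ (-x)) * (starRingEnd ℂ) (ψ (-x))) :=
    integral_add i123 i4
  have eB : (∫ x : ℝ, D ψ x * (starRingEnd ℂ) (D φ (-x)) + D φ x * (starRingEnd ℂ) (D ψ (-x))
          + (α : ℂ) * (φ x * ψ x) * ((starRingEnd ℂ) (φ (-x))) ^ 2)
      = (∫ x : ℝ, D ψ x * (starRingEnd ℂ) (D φ (-x)) + D φ x * (starRingEnd ℂ) (D ψ (-x)))
        + ∫ x : ℝ, (α : ℂ) * (φ x * ψ x) * ((starRingEnd ℂ) (φ (-x))) ^ 2 :=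
    integral_add i12 i3
  have eC : (∫ x : ℝ, D ψ x * (starRingEnd ℂ) (D φ (-x)) + D φ x * (starRingEnd ℂ) (D ψ (-x)))
      = (∫ x : ℝ, D ψ x * (starRingEnd ℂ) (D φ (-x)))
        + ∫ x : ℝ, D φ x * (starRingEnd ℂ) (D ψ (-x)) :=
    integral_add i1 i2
  have eD : (∫ x : ℝ, ψ x * (starRingEnd ℂ) (D (D φ) (-x))
          + D (D φ) x * (starRingEnd ℂ) (ψ (-x)))
      = (∫ x : ℝ, ψ x * (starRingEnd ℂ) (D (D φ) (-x)))
        + ∫ x : ℝ, D (D φ) x * (starRingEnd ℂ) (ψ (-x)) :=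
    integral_add i1' i2'
  have eE : (∫ x : ℝ, ψ x * (starRingEnd ℂ) (D (D φ) (-x))
          + D (D φ) x * (starRingEnd ℂ) (ψ (-x))
          + (α : ℂ) * (φ x * ψ x) * ((starRingEnd ℂ) (φ (-x))) ^ 2)
      = (∫ x : ℝ, ψ x * (starRingEnd ℂ) (D (D φ) (-x))
          + D (D φ) x * (starRingEnd ℂ) (ψ (-x)))
        + ∫ x : ℝ, (α : ℂ) * (φ x * ψ x) * ((starRingEnd ℂ) (φ (-x))) ^ 2 :=
    integral_add i12' i3
  have eF : (∫ x : ℝ, ψ x * (starRingEnd ℂ) (D (D φ) (-x))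
          + D (D φ) x * (starRingEnd ℂ) (ψ (-x))
          + (α : ℂ) * (φ x * ψ x) * ((starRingEnd ℂ) (φ (-x))) ^ 2
          + (α : ℂ) * φ x ^ 2 * ((starRingEnd ℂ) (φ (-x)) * (starRingEnd ℂ) (ψ (-x))))
      = (∫ x : ℝ, ψ x * (starRingEnd ℂ) (D (D φ) (-x))
          + D (D φ) x * (starRingEnd ℂ) (ψ (-x))
          + (α : ℂ) * (φ x * ψ x) * ((starRingEnd ℂ) (φ (-x))) ^ 2)
        + ∫ x : ℝ, (α : ℂ) * φ x ^ 2
            * ((starRingEnd ℂ) (φ (-x)) * (starRingEnd ℂ) (ψ (-x))) :=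
    integral_add i123' i4
  have hpt : ∀ x : ℝ, ψ x * (starRingEnd ℂ) (D (D φ) (-x))
      + D (D φ) x * (starRingEnd ℂ) (ψ (-x))
      + (α : ℂ) * (φ x * ψ x) * ((starRingEnd ℂ) (φ (-x))) ^ 2
      + (α : ℂ) * φ x ^ 2 * ((starRingEnd ℂ) (φ (-x)) * (starRingEnd ℂ) (ψ (-x))) = 0 := by
    intro x
    have h1 := hps x
    have h2 := congrArg (starRingEnd ℂ) (hps (-x))
    simp only [map_add, map_mul, map_pow, map_zero, Complex.conj_conj, Complex.conj_I,
      Complex.conj_ofReal, neg_neg] at h2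
    linear_combination (ψ x) * h2 + ((starRingEnd ℂ) (ψ (-x))) * h1
  rw [eA, eB, eC, ibp1 φ ψ, ibp2 φ ψ, ← eD, ← eE, ← eF]
  simp only [hpt]
  simp

end

end NNLSAux

open NNLSAux

/-- Energy conservation for the nonlocal NLS: if `u(t,·)` is a continuously differentiable
curve of Schwartz functions (with time derivative `ut`) solving `i uₜ + ∂ₓ²u + α u² u* = 0`,
where `u*(t,x) = conj(u(t,−x))`, then
`E(t) = ∫ [∂ₓu(t,x) conj(∂ₓu(t,−x)) + (α/2) u(t,x)² conj(u(t,−x))²] dx` is constant. -/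
theorem stmt_18 (α : ℝ) (u ut : ℝ → SchwartzMap ℝ ℂ)
    (hu : Continuous u) (hut : Continuous ut)
    (hderiv : ∀ t x : ℝ, HasDerivAt (fun τ => u τ x) (ut t x) t)
    (heq : ∀ t x : ℝ,
      Complex.I * ut t x + deriv (deriv (fun y => u t y)) x
        + (α : ℂ) * (u t x) ^ 2 * (starRingEnd ℂ) (u t (-x)) = 0) :
    ∀ t : ℝ,
      (∫ x : ℝ, deriv (fun y => u t y) x * (starRingEnd ℂ) (deriv (fun y => u t y) (-x))
          + (α / 2 : ℂ) * (u t x) ^ 2 * ((starRingEnd ℂ) (u t (-x))) ^ 2)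
        = ∫ x : ℝ, deriv (fun y => u 0 y) x * (starRingEnd ℂ) (deriv (fun y => u 0 y) (-x))
          + (α / 2 : ℂ) * (u 0 x) ^ 2 * ((starRingEnd ℂ) (u 0 (-x))) ^ 2 := by
  have heqD : ∀ t x : ℝ, Complex.I * ut t x + D (D (u t)) x
      + (α : ℂ) * (u t x) ^ 2 * (starRingEnd ℂ) (u t (-x)) = 0 := by
    intro t x
    have h := heq t x
    rwa [show deriv (fun y => u t y) = ⇑(D (u t)) from deriv_eq_D (u t), deriv_eq_D] at h
  -- the formal time derivative of the energy density is correct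
  have hED : ∀ t x : ℝ, HasDerivAt (fun τ => EI α (u τ) x) (ED α (u t) (ut t) x) t := by
    intro t x
    have hA := timeDerivD u ut hut hderiv t x
    have hB : HasDerivAt (fun τ => (starRingEnd ℂ) (D (u τ) (-x)))
        ((starRingEnd ℂ) (D (ut t) (-x))) t := by
      simp only [starRingEnd_apply]
      exact (timeDerivD u ut hut hderiv t (-x)).star
    have hC := hderiv t x
    have hQ : HasDerivAt (fun τ => (starRingEnd ℂ) (u τ (-x)))
        ((starRingEnd ℂ) (ut t (-x))) t := by
      simp only [starRingEnd_apply]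
      exact (hderiv t (-x)).star
    have hsq : HasDerivAt (fun τ => u τ x ^ 2) (ut t x * u t x + u t x * ut t x) t := by
      simpa [pow_two] using hC.fun_mul hC
    have hsqq : HasDerivAt (fun τ => ((starRingEnd ℂ) (u τ (-x))) ^ 2)
        ((starRingEnd ℂ) (ut t (-x)) * (starRingEnd ℂ) (u t (-x))
          + (starRingEnd ℂ) (u t (-x)) * (starRingEnd ℂ) (ut t (-x))) t := by
      simpa [pow_two] using hQ.fun_mul hQ
    have h := (hA.fun_mul hB).fun_add
      ((HasDerivAt.const_mul ((α : ℂ) / 2) hsq).fun_mul hsqq)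
    unfold EI ED
    refine h.congr_deriv ?_
    ring
  -- derivative of the energy is zero
  have hzero : ∀ t : ℝ, (∫ x : ℝ, ED α (u t) (ut t) x) = 0 := fun t =>
    integral_ED_zero α (u t) (ut t) (heqD t)
  have hcE : Continuous fun t => cE α (u t) (ut t) := by
    have c1 : Continuous fun t => m (u t) := m_continuous.comp hu
    have c2 : Continuous fun t => m (ut t) := m_continuous.comp hut
    have c3 : Continuous fun t => m (D (u t)) := m_continuous.comp (D_continuous.comp hu)
    have c4 : Continuous fun t => m (D (ut t)) := m_continuous.comp (D_continuous.comp hut)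
    unfold cE
    exact (((c4.mul c3).add (c3.mul c4)).add
      ((continuous_const.mul (c1.mul c2)).mul (c1.mul c1))).add
      ((continuous_const.mul (c1.pow 2)).mul (c1.mul c2))
  have hd : ∀ t₀ : ℝ, HasDerivAt (fun t => ∫ x : ℝ, EI α (u t) x) 0 t₀ := by
    intro t₀
    obtain ⟨tm, htm, hmax⟩ := (isCompact_closedBall t₀ 1).exists_isMaxOn
      ⟨t₀, mem_closedBall_self zero_le_one⟩ hcE.continuousOn
    have main := hasDerivAt_integral_of_dominated_loc_of_deriv_le (μ := volume)
      (F := fun t x => EI α (u t) x) (F' := fun t x => ED α (u t) (ut t) x) (x₀ := t₀)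
      (bound := fun x => cE α (u tm) (ut tm) * (1 + x ^ 2)⁻¹) (s := ball t₀ 1) (ball_mem_nhds t₀ one_pos)
      (Eventually.of_forall fun t => (EI_cont α (u t)).aestronglyMeasurable)
      (integrable_decay _ (EI_cont α (u t₀)) (norm_EI_le α (u t₀)))
      ((ED_cont α (u t₀) (ut t₀)).aestronglyMeasurable)
      (ae_of_all _ fun x t ht => (norm_ED_le α (u t) (ut t) x).trans
        (mul_le_mul_of_nonneg_right (hmax (ball_subset_closedBall ht)) (by positivity)))
      ((integrable_inv_one_add_sq.const_mul _).congr (by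
        filter_upwards with x using by ring))
      (ae_of_all _ fun x t _ => hED t x)
    have h := main.2
    rwa [hzero t₀] at h
  have key : ∀ t : ℝ, (∫ x : ℝ, EI α (u t) x) = ∫ x : ℝ, EI α (u 0) x := fun t =>
    is_const_of_deriv_eq_zero (fun s => (hd s).differentiableAt)
      (fun s => (hd s).deriv) t 0
  intro t
  have h := key t
  simp only [deriv_eq_D]
  exact h
end

section
/- Let α ∈ ℝ and let u : ℝ → 𝒮(ℝ;ℂ) be a continuously differentiable curve in the Schwartz space, written u(t,x), which solves the nonlocal derivative NLS: for all (t,x), i∂ₜu(t,x) + ∂ₓ²u(t,x) + α u(t,x) conj(u(t,−x)) ∂ₓu(t,x) = 0. Then the mass M(t) := ∫_ℝ u(t,x) · conj(u(t,−x)) dx is constant in t: M(t) = M(0) for all t. -/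
open MeasureTheory Filter

section NdNLSAux

local notation "𝓒" => starRingEnd ℂ

private lemma conj_hasDerivAt {f : ℝ → ℂ} {f' : ℂ} {x : ℝ}
    (h : HasDerivAt f f' x) :
    HasDerivAt (fun y => (starRingEnd ℂ) (f y)) ((starRingEnd ℂ) f') x := by
  have h2 := (Complex.conjCLE.toContinuousLinearMap.hasFDerivAt (x := f x)).comp_hasDerivAt x h
  exact h2

private lemma sch_tendsto_atTop (f : SchwartzMap ℝ ℂ) : Tendsto f atTop (nhds 0) := by
  have h : Tendsto (⇑f) (cocompact ℝ) (nhds 0) := f.toZeroAtInfty.zero_at_infty'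
  exact h.mono_left atTop_le_cocompact

private lemma sch_tendsto_atBot (f : SchwartzMap ℝ ℂ) : Tendsto f atBot (nhds 0) := by
  have h : Tendsto (⇑f) (cocompact ℝ) (nhds 0) := f.toZeroAtInfty.zero_at_infty'
  exact h.mono_left atBot_le_cocompact

private lemma integrable_conj {g : ℝ → ℂ} (h : Integrable g) :
    Integrable (fun x => (starRingEnd ℂ) (g x)) :=
  h.mono (Complex.continuous_conj.comp_aestronglyMeasurable h.aestronglyMeasurable)
    (Filter.Eventually.of_forall fun x => by simp)

private lemma integrable_mul_bdd {g b : ℝ → ℂ} (hg : Integrable g) (hb : Continuous b)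
    (hbd : ∃ C, ∀ x, ‖b x‖ ≤ C) : Integrable (fun x => g x * b x) := by
  have h := hg.bdd_mul hb.aestronglyMeasurable (Filter.Eventually.of_forall hbd.choose_spec)
  simpa [mul_comm] using h

private lemma partB (α : ℝ) (f w : SchwartzMap ℝ ℂ)
    (heq1 : ∀ x : ℝ, Complex.I * w x + deriv (deriv (fun y => f y)) x
        + (α : ℂ) * f x * (starRingEnd ℂ) (f (-x)) * deriv (fun y => f y) x = 0) :
    (∫ x : ℝ, (w x * (starRingEnd ℂ) (f (-x)) + f x * (starRingEnd ℂ) (w (-x)))) = 0 := by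
  set d1 : SchwartzMap ℝ ℂ := SchwartzMap.derivCLM ℝ ℂ f with hd1def
  set d2 : SchwartzMap ℝ ℂ := SchwartzMap.derivCLM ℝ ℂ d1 with hd2def
  have hd1 : ∀ x : ℝ, d1 x = deriv (fun y => f y) x := fun x => SchwartzMap.derivCLM_apply ℝ f x
  have hd1' : ⇑d1 = deriv (fun y => f y) := funext hd1
  have hd2 : ∀ x : ℝ, d2 x = deriv (deriv (fun y => f y)) x := fun x => by
    rw [← hd1']; exact SchwartzMap.derivCLM_apply ℝ d1 x
  have heq2 : ∀ x : ℝ, Complex.I * w x + d2 x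
      + (α : ℂ) * f x * 𝓒 (f (-x)) * d1 x = 0 := fun x => by
    have h := heq1 x
    rw [← hd2 x, ← hd1 x] at h
    exact h
  have heq3 : ∀ x : ℝ, -Complex.I * 𝓒 (w (-x)) + 𝓒 (d2 (-x))
      + (α : ℂ) * 𝓒 (f (-x)) * f x * 𝓒 (d1 (-x)) = 0 := by
    intro x
    have h := congrArg (starRingEnd ℂ) (heq2 (-x))
    simp only [map_add, map_mul, map_zero, Complex.conj_I, Complex.conj_conj,
      Complex.conj_ofReal, neg_neg] at h
    linear_combination h
  -- key pointwise identity
  have key : ∀ x : ℝ, w x * 𝓒 (f (-x)) + f x * 𝓒 (w (-x))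
      = Complex.I * (d2 x * 𝓒 (f (-x)) - f x * 𝓒 (d2 (-x))
          + (α : ℂ) * (f x * 𝓒 (f (-x)))
            * (d1 x * 𝓒 (f (-x)) + f x * (-(𝓒 (d1 (-x)))))) := by
    intro x
    have hw : w x = Complex.I * (d2 x + (α : ℂ) * f x * 𝓒 (f (-x)) * d1 x) := by
      linear_combination (-Complex.I) * heq2 x + (w x) * Complex.I_sq
    have hy : 𝓒 (w (-x)) = -Complex.I * (𝓒 (d2 (-x))
        + (α : ℂ) * 𝓒 (f (-x)) * f x * 𝓒 (d1 (-x))) := by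
      linear_combination Complex.I * heq3 x + (𝓒 (w (-x))) * Complex.I_sq
    linear_combination (𝓒 (f (-x))) * hw + (f x) * hy
  set g : ℝ → ℂ := fun x => d1 x * 𝓒 (f (-x)) - f x * (-(𝓒 (d1 (-x))))
      + ((α : ℂ)/2) * ((f x * 𝓒 (f (-x))) * (f x * 𝓒 (f (-x)))) with hgdef
  set G : ℝ → ℂ := fun x => d2 x * 𝓒 (f (-x)) - f x * 𝓒 (d2 (-x))
      + (α : ℂ) * (f x * 𝓒 (f (-x)))
        * (d1 x * 𝓒 (f (-x)) + f x * (-(𝓒 (d1 (-x))))) with hGdef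
  -- derivative facts
  have hfd : ∀ x : ℝ, HasDerivAt (fun y => f y) (d1 x) x := fun x => by
    rw [hd1 x]; exact f.differentiableAt.hasDerivAt
  have hd1d : ∀ x : ℝ, HasDerivAt (fun y => d1 y) (d2 x) x := fun x => by
    rw [hd2 x, ← hd1']; exact d1.differentiableAt.hasDerivAt
  have hvd : ∀ x : ℝ, HasDerivAt (fun y => 𝓒 (f (-y))) (-(𝓒 (d1 (-x)))) x := fun x => by
    have h00 := (hfd (-x)).scomp x (hasDerivAt_neg x)
    have h0 : HasDerivAt (fun y : ℝ => f (-y)) (-(d1 (-x))) x := by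
      simpa [neg_one_smul, Function.comp_def] using h00
    have h1 := conj_hasDerivAt h0
    simpa [map_neg] using h1
  have hv'd : ∀ x : ℝ, HasDerivAt (fun y => -(𝓒 (d1 (-y)))) (𝓒 (d2 (-x))) x := fun x => by
    have h00 := (hd1d (-x)).scomp x (hasDerivAt_neg x)
    have h0 : HasDerivAt (fun y : ℝ => d1 (-y)) (-(d2 (-x))) x := by
      simpa [neg_one_smul, Function.comp_def] using h00
    have h1 := (conj_hasDerivAt h0).neg
    simpa [map_neg, Pi.neg_def] using h1
  have hgd : ∀ x : ℝ, HasDerivAt g (G x) x := fun x => by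
    have h := (((hd1d x).mul (hvd x)).sub ((hfd x).mul (hv'd x))).add
      ((((hfd x).mul (hvd x)).mul ((hfd x).mul (hvd x))).const_mul ((α : ℂ)/2))
    have h' : HasDerivAt g _ x := h
    convert h' using 1
    simp only [hGdef, Pi.mul_apply]
    ring
  -- tendsto of g at ±∞
  have hvt_top : Tendsto (fun x : ℝ => 𝓒 (f (-x))) atTop (nhds 0) := by
    have h1 : Tendsto (fun x : ℝ => f (-x)) atTop (nhds 0) :=
      (sch_tendsto_atBot f).comp tendsto_neg_atTop_atBot
    have := (Complex.continuous_conj.tendsto 0).comp h1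
    simpa [Function.comp_def] using this
  have hvt_bot : Tendsto (fun x : ℝ => 𝓒 (f (-x))) atBot (nhds 0) := by
    have h1 : Tendsto (fun x : ℝ => f (-x)) atBot (nhds 0) :=
      (sch_tendsto_atTop f).comp tendsto_neg_atBot_atTop
    have := (Complex.continuous_conj.tendsto 0).comp h1
    simpa [Function.comp_def] using this
  have hv't_top : Tendsto (fun x : ℝ => -(𝓒 (d1 (-x)))) atTop (nhds 0) := by
    have h1 : Tendsto (fun x : ℝ => d1 (-x)) atTop (nhds 0) :=
      (sch_tendsto_atBot d1).comp tendsto_neg_atTop_atBot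
    have := ((Complex.continuous_conj.tendsto 0).comp h1).neg
    simpa using this
  have hv't_bot : Tendsto (fun x : ℝ => -(𝓒 (d1 (-x)))) atBot (nhds 0) := by
    have h1 : Tendsto (fun x : ℝ => d1 (-x)) atBot (nhds 0) :=
      (sch_tendsto_atTop d1).comp tendsto_neg_atBot_atTop
    have := ((Complex.continuous_conj.tendsto 0).comp h1).neg
    simpa using this
  have htop : Tendsto g atTop (nhds 0) := by
    have h := (((sch_tendsto_atTop d1).mul hvt_top).sub
        ((sch_tendsto_atTop f).mul hv't_top)).add
      ((((sch_tendsto_atTop f).mul hvt_top).mul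
        ((sch_tendsto_atTop f).mul hvt_top)).const_mul ((α : ℂ)/2))
    rw [hgdef]
    simpa using h
  have hbot : Tendsto g atBot (nhds 0) := by
    have h := (((sch_tendsto_atBot d1).mul hvt_bot).sub
        ((sch_tendsto_atBot f).mul hv't_bot)).add
      ((((sch_tendsto_atBot f).mul hvt_bot).mul
        ((sch_tendsto_atBot f).mul hvt_bot)).const_mul ((α : ℂ)/2))
    rw [hgdef]
    simpa using h
  -- integrability of G
  have hb1 : ∀ x : ℝ, ‖f x‖ ≤ SchwartzMap.seminorm ℝ 0 0 f := SchwartzMap.norm_le_seminorm ℝ f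
  have hb2 : ∀ x : ℝ, ‖𝓒 (f (-x))‖ ≤ SchwartzMap.seminorm ℝ 0 0 f := fun x => by
    simpa using SchwartzMap.norm_le_seminorm ℝ f (-x)
  have hKn : (0 : ℝ) ≤ SchwartzMap.seminorm ℝ 0 0 f := apply_nonneg _ _
  have cv : Continuous fun x : ℝ => 𝓒 (f (-x)) :=
    Complex.continuous_conj.comp (f.continuous.comp continuous_neg)
  have hint : Integrable G := by
    have T1 : Integrable fun x : ℝ => d2 x * 𝓒 (f (-x)) :=
      integrable_mul_bdd d2.integrable cv ⟨_, hb2⟩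
    have T2 : Integrable fun x : ℝ => f x * 𝓒 (d2 (-x)) :=
      Integrable.bdd_mul (integrable_conj (d2.integrable.comp_neg))
        f.continuous.aestronglyMeasurable (ae_of_all _ hb1)
    have T3 : Integrable fun x : ℝ =>
        d1 x * ((α : ℂ) * f x * 𝓒 (f (-x)) * 𝓒 (f (-x))) := by
      refine integrable_mul_bdd d1.integrable
        (((continuous_const.mul f.continuous).mul cv).mul cv) ?_
      refine ⟨‖(α : ℂ)‖ * SchwartzMap.seminorm ℝ 0 0 f * SchwartzMap.seminorm ℝ 0 0 f
        * SchwartzMap.seminorm ℝ 0 0 f, fun x => ?_⟩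
      have e : ‖(α : ℂ) * f x * 𝓒 (f (-x)) * 𝓒 (f (-x))‖
          = ‖(α : ℂ)‖ * ‖f x‖ * ‖𝓒 (f (-x))‖ * ‖𝓒 (f (-x))‖ := by
        simp [norm_mul]
      rw [e]
      gcongr <;> first | exact hb1 x | exact hb2 x
    have T4 : Integrable fun x : ℝ =>
        𝓒 (d1 (-x)) * ((α : ℂ) * f x * f x * 𝓒 (f (-x))) := by
      refine integrable_mul_bdd (integrable_conj (d1.integrable.comp_neg))
        (((continuous_const.mul f.continuous).mul f.continuous).mul cv) ?_
      refine ⟨‖(α : ℂ)‖ * SchwartzMap.seminorm ℝ 0 0 f * SchwartzMap.seminorm ℝ 0 0 f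
        * SchwartzMap.seminorm ℝ 0 0 f, fun x => ?_⟩
      have e : ‖(α : ℂ) * f x * f x * 𝓒 (f (-x))‖
          = ‖(α : ℂ)‖ * ‖f x‖ * ‖f x‖ * ‖𝓒 (f (-x))‖ := by
        simp [norm_mul]
      rw [e]
      gcongr <;> first | exact hb1 x | exact hb2 x
    have hGeq : G = fun x : ℝ => (d2 x * 𝓒 (f (-x)) - f x * 𝓒 (d2 (-x)))
        + (d1 x * ((α : ℂ) * f x * 𝓒 (f (-x)) * 𝓒 (f (-x)))
          - 𝓒 (d1 (-x)) * ((α : ℂ) * f x * f x * 𝓒 (f (-x)))) := by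
      funext x
      simp only [hGdef]
      ring
    rw [hGeq]
    exact (T1.sub T2).add (T3.sub T4)
  -- FTC
  have hIic : ∫ x in Set.Iic (0:ℝ), G x = g 0 - 0 :=
    MeasureTheory.integral_Iic_of_hasDerivAt_of_tendsto' (fun x _ => hgd x)
      hint.integrableOn hbot
  have hIoi : ∫ x in Set.Ioi (0:ℝ), G x = 0 - g 0 :=
    MeasureTheory.integral_Ioi_of_hasDerivAt_of_tendsto' (fun x _ => hgd x)
      hint.integrableOn htop
  have hGzero : (∫ x : ℝ, G x) = 0 := by
    rw [← intervalIntegral.integral_Iic_add_Ioi (b := (0:ℝ)) hint.integrableOn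
      hint.integrableOn, hIic, hIoi]
    ring
  calc (∫ x : ℝ, (w x * 𝓒 (f (-x)) + f x * 𝓒 (w (-x))))
      = ∫ x : ℝ, Complex.I * G x := by
        congr 1
        funext x
        rw [key x, hGdef]
    _ = Complex.I * ∫ x : ℝ, G x := MeasureTheory.integral_const_mul _ _
    _ = 0 := by rw [hGzero, mul_zero]

end NdNLSAux

/-- Mass conservation for the nonlocal derivative NLS: if `u(t,·)` is a continuously
differentiable curve of Schwartz functions (with time derivative `ut`) solving
`i uₜ + ∂ₓ²u + α u u* ∂ₓu = 0`, where `u*(t,x) = conj(u(t,−x))`, then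
`M(t) = ∫ u(t,x) conj(u(t,−x)) dx` is constant. -/
theorem stmt_19 (α : ℝ) (u ut : ℝ → SchwartzMap ℝ ℂ)
    (hu : Continuous u) (hut : Continuous ut)
    (hderiv : ∀ t x : ℝ, HasDerivAt (fun τ => u τ x) (ut t x) t)
    (heq : ∀ t x : ℝ,
      Complex.I * ut t x + deriv (deriv (fun y => u t y)) x
        + (α : ℂ) * u t x * (starRingEnd ℂ) (u t (-x)) * deriv (fun y => u t y) x = 0) :
    ∀ t : ℝ,
      (∫ x : ℝ, u t x * (starRingEnd ℂ) (u t (-x)))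
        = ∫ x : ℝ, u 0 x * (starRingEnd ℂ) (u 0 (-x)) := by
  have hzero : ∀ t : ℝ, (∫ x : ℝ, (ut t x * (starRingEnd ℂ) (u t (-x))
      + u t x * (starRingEnd ℂ) (ut t (-x)))) = 0 :=
    fun t => partB α (u t) (ut t) (heq t)
  have hDer : ∀ t₀ : ℝ, HasDerivAt (fun s => ∫ x : ℝ, u s x * (starRingEnd ℂ) (u s (-x)))
      (∫ x : ℝ, (ut t₀ x * (starRingEnd ℂ) (u t₀ (-x))
        + u t₀ x * (starRingEnd ℂ) (ut t₀ (-x)))) t₀ := by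
    intro t₀
    have hsem : ∀ k : ℕ, ∀ w : ℝ → SchwartzMap ℝ ℂ, Continuous w →
        ∃ C : ℝ, 0 ≤ C ∧ ∀ s ∈ Metric.ball t₀ 1, SchwartzMap.seminorm ℝ k 0 (w s) ≤ C := by
      intro k w hw
      have hc : Continuous fun s => SchwartzMap.seminorm ℝ k 0 (w s) :=
        ((schwartz_withSeminorms ℝ ℝ ℂ).continuous_seminorm (k, 0)).comp hw
      obtain ⟨C, hC⟩ := (isCompact_Icc (a := t₀ - 1) (b := t₀ + 1)).exists_bound_of_continuousOn
        hc.continuousOn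
      refine ⟨max C 0, le_max_right _ _, fun s hs => ?_⟩
      have hs2 : |s - t₀| < 1 := by
        rw [Metric.mem_ball, Real.dist_eq] at hs
        exact hs
      have hs' : s ∈ Set.Icc (t₀ - 1) (t₀ + 1) := by
        rw [abs_lt] at hs2
        constructor <;> linarith [hs2.1, hs2.2]
      have h2 := hC s hs'
      rw [Real.norm_eq_abs] at h2
      exact le_trans (le_trans (le_abs_self _) h2) (le_max_left _ _)
    obtain ⟨C0, hC0n, hC0⟩ := hsem 0 u hu
    obtain ⟨C2, hC2n, hC2⟩ := hsem 2 u hu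
    obtain ⟨D0, hD0n, hD0⟩ := hsem 0 ut hut
    obtain ⟨D2, hD2n, hD2⟩ := hsem 2 ut hut
    have decay : ∀ (h : SchwartzMap ℝ ℂ) (A B : ℝ), SchwartzMap.seminorm ℝ 0 0 h ≤ A →
        SchwartzMap.seminorm ℝ 2 0 h ≤ B → ∀ x : ℝ, ‖h x‖ ≤ (A + B) * (1 + x ^ 2)⁻¹ := by
      intro h A B hA hB x
      have a0 : ‖h x‖ ≤ A := (SchwartzMap.norm_le_seminorm ℝ h x).trans hA
      have a2 : x ^ 2 * ‖h x‖ ≤ B := by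
        have := (SchwartzMap.norm_pow_mul_le_seminorm ℝ h 2 x).trans hB
        simpa [Real.norm_eq_abs, sq_abs] using this
      have hx : (0 : ℝ) < 1 + x ^ 2 := by positivity
      have hkey : ‖h x‖ * (1 + x ^ 2) ≤ A + B := by nlinarith [norm_nonneg (h x)]
      calc ‖h x‖ = ‖h x‖ * (1 + x ^ 2) * (1 + x ^ 2)⁻¹ := by field_simp
        _ ≤ (A + B) * (1 + x ^ 2)⁻¹ := mul_le_mul_of_nonneg_right hkey (by positivity)
    have hmeas : ∀ᶠ s in nhds t₀,
        AEStronglyMeasurable (fun x : ℝ => u s x * (starRingEnd ℂ) (u s (-x))) volume :=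
      Filter.Eventually.of_forall fun s =>
        ((u s).continuous.mul (Complex.continuous_conj.comp
          ((u s).continuous.comp continuous_neg))).aestronglyMeasurable
    have hint0 : Integrable (fun x : ℝ => u t₀ x * (starRingEnd ℂ) (u t₀ (-x))) volume :=
      Integrable.bdd_mul (integrable_conj ((u t₀).integrable.comp_neg))
        (u t₀).continuous.aestronglyMeasurable (ae_of_all _ (SchwartzMap.norm_le_seminorm ℝ (u t₀)))
    have hmeas' : AEStronglyMeasurable (fun x : ℝ => ut t₀ x * (starRingEnd ℂ) (u t₀ (-x))
        + u t₀ x * (starRingEnd ℂ) (ut t₀ (-x))) volume := by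
      exact (((ut t₀).continuous.mul (Complex.continuous_conj.comp
          ((u t₀).continuous.comp continuous_neg))).add
        ((u t₀).continuous.mul (Complex.continuous_conj.comp
          ((ut t₀).continuous.comp continuous_neg)))).aestronglyMeasurable
    have hbound : ∀ᵐ x : ℝ ∂volume, ∀ s ∈ Metric.ball t₀ 1,
        ‖ut s x * (starRingEnd ℂ) (u s (-x)) + u s x * (starRingEnd ℂ) (ut s (-x))‖
          ≤ ((D0 + D2) * C0 + (C0 + C2) * D0) * (1 + x ^ 2)⁻¹ := by
      refine Filter.Eventually.of_forall fun x => fun s hs => ?_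
      have b1 : ‖ut s x‖ ≤ (D0 + D2) * (1 + x ^ 2)⁻¹ :=
        decay (ut s) D0 D2 (hD0 s hs) (hD2 s hs) x
      have b2 : ‖(starRingEnd ℂ) (u s (-x))‖ ≤ C0 := by
        simpa using (SchwartzMap.norm_le_seminorm ℝ (u s) (-x)).trans (hC0 s hs)
      have b3 : ‖u s x‖ ≤ (C0 + C2) * (1 + x ^ 2)⁻¹ :=
        decay (u s) C0 C2 (hC0 s hs) (hC2 s hs) x
      have b4 : ‖(starRingEnd ℂ) (ut s (-x))‖ ≤ D0 := by
        simpa using (SchwartzMap.norm_le_seminorm ℝ (ut s) (-x)).trans (hD0 s hs)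
      have hn1 : (0 : ℝ) ≤ (D0 + D2) * (1 + x ^ 2)⁻¹ :=
        mul_nonneg (add_nonneg hD0n hD2n) (by positivity)
      have hn3 : (0 : ℝ) ≤ (C0 + C2) * (1 + x ^ 2)⁻¹ :=
        mul_nonneg (add_nonneg hC0n hC2n) (by positivity)
      calc ‖ut s x * (starRingEnd ℂ) (u s (-x)) + u s x * (starRingEnd ℂ) (ut s (-x))‖
          ≤ ‖ut s x‖ * ‖(starRingEnd ℂ) (u s (-x))‖
            + ‖u s x‖ * ‖(starRingEnd ℂ) (ut s (-x))‖ := by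
            refine (norm_add_le _ _).trans ?_
            simp [norm_mul]
        _ ≤ ((D0 + D2) * (1 + x ^ 2)⁻¹) * C0 + ((C0 + C2) * (1 + x ^ 2)⁻¹) * D0 :=
            add_le_add (mul_le_mul b1 b2 (norm_nonneg _) hn1)
              (mul_le_mul b3 b4 (norm_nonneg _) hn3)
        _ = ((D0 + D2) * C0 + (C0 + C2) * D0) * (1 + x ^ 2)⁻¹ := by ring
    have hbint : Integrable (fun x : ℝ =>
        ((D0 + D2) * C0 + (C0 + C2) * D0) * (1 + x ^ 2)⁻¹) volume :=
      integrable_inv_one_add_sq.const_mul _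
    have hdiff : ∀ᵐ x : ℝ ∂volume, ∀ s ∈ Metric.ball t₀ 1,
        HasDerivAt (fun τ => u τ x * (starRingEnd ℂ) (u τ (-x)))
          (ut s x * (starRingEnd ℂ) (u s (-x)) + u s x * (starRingEnd ℂ) (ut s (-x))) s :=
      Filter.Eventually.of_forall fun x => fun s _ =>
        (hderiv s x).mul (conj_hasDerivAt (hderiv s (-x)))
    exact (hasDerivAt_integral_of_dominated_loc_of_deriv_le (Metric.ball_mem_nhds t₀ one_pos) hmeas hint0 hmeas'
      hbound hbint hdiff).2
  have hM : ∀ t : ℝ, HasDerivAt (fun s => ∫ x : ℝ, u s x * (starRingEnd ℂ) (u s (-x))) 0 t := by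
    intro t
    have := hDer t
    rwa [hzero t] at this
  intro t
  exact is_const_of_deriv_eq_zero (fun s => (hM s).differentiableAt)
    (fun s => (hM s).deriv) t 0
end
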